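/- Let A, B ⊆ ℕ and let N be a natural number. Write |C|_a^b for the cardinality of C ∩ (a, b], and let Υ(C, D; N) denote the number of quadruples (c₁, c₂, d₁, d₂) with c₁, c₂ ∈ C ∩ (2N, 3N], d₁, d₂ ∈ D ∩ (0, N] and c₁ - d₁ = c₂ - d₂. Then (|B|_0^N · |ℕ \ (A+B)|_{2N}^{3N})² ≤ |ℕ \ A|_N^{3N} · Υ(ℕ \ (A+B), B; N). -/

import Mathlib

open Pointwise

/-- Theorem 1.1:
`(|B|₀^N · |complement of (A+B)|_{2N}^{3N})² ≤ |complement of A|_N^{3N} · Υ(complement of (A+B), B; N)`. -/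
theorem stmt_1 (A B : Set ℕ) (N : ℕ) :
    ((B ∩ Set.Ioc 0 N).ncard * (((A + B)ᶜ : Set ℕ) ∩ Set.Ioc (2 * N) (3 * N)).ncard) ^ 2
      ≤ ((Aᶜ : Set ℕ) ∩ Set.Ioc N (3 * N)).ncard *
        {q : ℕ × ℕ × ℕ × ℕ |
          q.1 ∈ ((A + B)ᶜ : Set ℕ) ∩ Set.Ioc (2 * N) (3 * N) ∧
          q.2.1 ∈ ((A + B)ᶜ : Set ℕ) ∩ Set.Ioc (2 * N) (3 * N) ∧
          q.2.2.1 ∈ B ∩ Set.Ioc 0 N ∧ q.2.2.2 ∈ B ∩ Set.Ioc 0 N ∧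
          q.1 - q.2.2.1 = q.2.1 - q.2.2.2}.ncard := by
  classical
  set C : Finset ℕ := (Finset.Ioc (2 * N) (3 * N)).filter (· ∈ (A + B)ᶜ) with hCdef
  set D : Finset ℕ := (Finset.Ioc 0 N).filter (· ∈ B) with hDdef
  set E : Finset ℕ := (Finset.Ioc N (3 * N)).filter (· ∈ Aᶜ) with hEdef
  have hCset : (((A + B)ᶜ : Set ℕ) ∩ Set.Ioc (2 * N) (3 * N)) = ↑C := by
    ext x; simp only [hCdef, Finset.coe_filter, Finset.mem_Ioc, Set.mem_inter_iff,
      Set.mem_Ioc, Set.mem_setOf_eq, Set.mem_compl_iff]; tauto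
  have hDset : (B ∩ Set.Ioc 0 N) = ↑D := by
    ext x; simp only [hDdef, Finset.coe_filter, Finset.mem_Ioc, Set.mem_inter_iff,
      Set.mem_Ioc, Set.mem_setOf_eq]; tauto
  have hEset : ((Aᶜ : Set ℕ) ∩ Set.Ioc N (3 * N)) = ↑E := by
    ext x; simp only [hEdef, Finset.coe_filter, Finset.mem_Ioc, Set.mem_inter_iff,
      Set.mem_Ioc, Set.mem_setOf_eq, Set.mem_compl_iff]; tauto
  -- key: differences land in E
  have hmap : ∀ p ∈ C ×ˢ D, p.1 - p.2 ∈ E := by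
    rintro ⟨c, d⟩ hp
    rw [Finset.mem_product] at hp
    obtain ⟨hc, hd⟩ := hp
    simp only [hCdef, Finset.mem_filter, Finset.mem_Ioc, Set.mem_compl_iff] at hc
    simp only [hDdef, Finset.mem_filter, Finset.mem_Ioc] at hd
    obtain ⟨⟨hc1, hc2⟩, hcAB⟩ := hc
    obtain ⟨⟨hd1, hd2⟩, hdB⟩ := hd
    have hdc : d ≤ c := le_trans (hd2.trans (by omega)) hc1.le
    simp only [hEdef, Finset.mem_filter, Finset.mem_Ioc, Set.mem_compl_iff]
    refine ⟨⟨by omega, by omega⟩, fun hA => hcAB ?_⟩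
    exact ⟨c - d, hA, d, hdB, Nat.sub_add_cancel hdc⟩
  set r : ℕ → ℕ := fun e => ((C ×ˢ D).filter (fun p => p.1 - p.2 = e)).card with hrdef
  have hsum : C.card * D.card = ∑ e ∈ E, r e := by
    rw [← Finset.card_product]
    exact Finset.card_eq_sum_card_fiberwise hmap
  -- the quadruple set as a finset
  set Q : Finset (ℕ × ℕ × ℕ × ℕ) :=
    (C ×ˢ C ×ˢ D ×ˢ D).filter (fun q => q.1 - q.2.2.1 = q.2.1 - q.2.2.2) with hQdef
  have hQset : {q : ℕ × ℕ × ℕ × ℕ |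
          q.1 ∈ ((A + B)ᶜ : Set ℕ) ∩ Set.Ioc (2 * N) (3 * N) ∧
          q.2.1 ∈ ((A + B)ᶜ : Set ℕ) ∩ Set.Ioc (2 * N) (3 * N) ∧
          q.2.2.1 ∈ B ∩ Set.Ioc 0 N ∧ q.2.2.2 ∈ B ∩ Set.Ioc 0 N ∧
          q.1 - q.2.2.1 = q.2.1 - q.2.2.2} = ↑Q := by
    ext ⟨a, b, c, d⟩
    simp only [Set.mem_setOf_eq, hCset, hDset, hQdef, Finset.coe_filter, Finset.mem_coe,
      Finset.mem_product, Set.mem_setOf_eq, Finset.mem_coe]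
    tauto
  -- the pair-of-pairs finset
  set T : Finset ((ℕ × ℕ) × ℕ × ℕ) :=
    ((C ×ˢ D) ×ˢ (C ×ˢ D)).filter (fun p => p.1.1 - p.1.2 = p.2.1 - p.2.2) with hTdef
  have hTcard : T.card = ∑ e ∈ E, r e ^ 2 := by
    have hmap2 : ∀ p ∈ T, p.1.1 - p.1.2 ∈ E := by
      intro p hp
      rw [hTdef, Finset.mem_filter, Finset.mem_product] at hp
      exact hmap _ hp.1.1
    rw [Finset.card_eq_sum_card_fiberwise hmap2]
    refine Finset.sum_congr rfl fun e he => ?_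
    have : T.filter (fun p => p.1.1 - p.1.2 = e) =
        ((C ×ˢ D).filter (fun p => p.1 - p.2 = e)) ×ˢ
          ((C ×ˢ D).filter (fun p => p.1 - p.2 = e)) := by
      ext ⟨⟨a, b⟩, c, d⟩
      simp only [hTdef, Finset.mem_filter, Finset.mem_product]
      constructor
      · rintro ⟨⟨⟨h1, h2⟩, h3⟩, h4⟩
        exact ⟨⟨h1, h4⟩, h2, by omega⟩
      · rintro ⟨⟨h1, h2⟩, h3, h4⟩
        exact ⟨⟨⟨h1, h3⟩, by omega⟩, h2⟩
    rw [this, Finset.card_product, hrdef, sq]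
  have hQT : Q.card = T.card := by
    refine Finset.card_nbij' (fun q => ((q.1, q.2.2.1), (q.2.1, q.2.2.2)))
      (fun p => (p.1.1, p.2.1, p.1.2, p.2.2)) ?_ ?_ ?_ ?_
    · rintro ⟨a, b, c, d⟩ hq
      simp only [hQdef, Finset.mem_filter, Finset.mem_product, Finset.mem_coe] at hq
      simp only [hTdef, Finset.mem_filter, Finset.mem_product, Finset.mem_coe]
      tauto
    · rintro ⟨⟨a, b⟩, c, d⟩ hp
      simp only [hTdef, Finset.mem_filter, Finset.mem_product, Finset.mem_coe] at hp
      simp only [hQdef, Finset.mem_filter, Finset.mem_product, Finset.mem_coe]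
      tauto
    · rintro ⟨a, b, c, d⟩ _; rfl
    · rintro ⟨⟨a, b⟩, c, d⟩ _; rfl
  -- Cauchy–Schwarz
  have hCS : (∑ e ∈ E, r e) ^ 2 ≤ E.card * ∑ e ∈ E, r e ^ 2 :=
    sq_sum_le_card_mul_sum_sq
  calc ((B ∩ Set.Ioc 0 N).ncard * (((A + B)ᶜ : Set ℕ) ∩ Set.Ioc (2 * N) (3 * N)).ncard) ^ 2
      = (C.card * D.card) ^ 2 := by
        rw [hDset, hCset, Set.ncard_coe_finset, Set.ncard_coe_finset, Nat.mul_comm]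
    _ = (∑ e ∈ E, r e) ^ 2 := by rw [hsum]
    _ ≤ E.card * ∑ e ∈ E, r e ^ 2 := hCS
    _ = E.card * Q.card := by rw [← hTcard, hQT]
    _ = _ := by rw [hQset, hEset, Set.ncard_coe_finset, Set.ncard_coe_finset]
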